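/- For all real numbers α > 2, c > 0 and ρ > 1, ∫_1^ρ (1 − exp(−c r^{−α})) r dr = (1/2) [ ρ² − 1 − ρ² exp(−c ρ^{−α}) + exp(−c) + c^{2/α} ( γ(1 − 2/α, c) − γ(1 − 2/α, c ρ^{−α}) ) ]. (This is the integral evaluation underlying the Laplace transform of the received power from near power beacons in Lemma 3, case 1 < ρ < ∞.) -/

import Mathlib

/-- The lower incomplete gamma function γ(s, x) = ∫_0^x t^(s-1) e^(-t) dt. -/
noncomputable def lowerGamma (s x : ℝ) : ℝ := ∫ t in (0:ℝ)..x, t ^ (s - 1) * Real.exp (-t)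

lemma lowerGamma_hasDerivAt (s x : ℝ) (hs : -1 < s - 1) (hx : 0 < x) :
    HasDerivAt (fun y => lowerGamma s y) (x ^ (s - 1) * Real.exp (-x)) x := by
  have hmeas : Measurable fun t : ℝ => t ^ (s - 1) * Real.exp (-t) :=
    (measurable_id.pow_const _).mul (Real.measurable_exp.comp measurable_neg)
  have hint : IntervalIntegrable (fun t : ℝ => t ^ (s - 1) * Real.exp (-t))
      MeasureTheory.volume 0 x :=
    (intervalIntegral.intervalIntegrable_rpow' hs).mul_continuousOn
      (Continuous.continuousOn (by continuity))
  exact intervalIntegral.integral_hasDerivAt_right hint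
    (hmeas.aestronglyMeasurable.stronglyMeasurableAtFilter)
    (((Real.continuousAt_rpow_const x (s - 1) (Or.inl hx.ne')).mul
      ((Real.continuous_exp.comp continuous_neg).continuousAt)))

theorem stmt_0 (α c ρ : ℝ) (hα : 2 < α) (hc : 0 < c) (hρ : 1 < ρ) :
    ∫ r in (1:ℝ)..ρ, (1 - Real.exp (-c * r ^ (-α))) * r =
      (1/2) * (ρ ^ 2 - 1 - ρ ^ 2 * Real.exp (-c * ρ ^ (-α)) + Real.exp (-c) +
        c ^ (2/α) * (lowerGamma (1 - 2/α) c - lowerGamma (1 - 2/α) (c * ρ ^ (-α)))) := by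
  have hα0 : (0:ℝ) < α := by linarith
  set s : ℝ := 1 - 2/α with hs_def
  have hs : -1 < s - 1 := by
    have : 2/α < 1 := by
      rw [div_lt_iff₀ hα0]; linarith
    simp only [hs_def]; linarith
  set g : ℝ → ℝ := fun r =>
    (1/2) * (r ^ 2 - r ^ 2 * Real.exp (-c * r ^ (-α)) -
      c ^ (2/α) * lowerGamma s (c * r ^ (-α))) with hg_def
  have key : ∀ r ∈ Set.uIcc (1:ℝ) ρ,
      HasDerivAt g ((1 - Real.exp (-c * r ^ (-α))) * r) r := by
    intro r hr
    rw [Set.uIcc_of_le hρ.le] at hr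
    have hr0 : (0:ℝ) < r := lt_of_lt_of_le one_pos hr.1
    have hpow : HasDerivAt (fun r : ℝ => r ^ (-α)) (-α * r ^ (-α - 1)) r :=
      Real.hasDerivAt_rpow_const (Or.inl hr0.ne')
    have hinner : HasDerivAt (fun r : ℝ => c * r ^ (-α)) (c * (-α * r ^ (-α - 1))) r :=
      hpow.const_mul c
    have hx : 0 < c * r ^ (-α) := mul_pos hc (Real.rpow_pos_of_pos hr0 _)
    have hG : HasDerivAt (fun r : ℝ => lowerGamma s (c * r ^ (-α)))
        ((c * r ^ (-α)) ^ (s - 1) * Real.exp (-(c * r ^ (-α))) * (c * (-α * r ^ (-α - 1)))) r :=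
      by have := (lowerGamma_hasDerivAt s (c * r ^ (-α)) hs hx).comp r hinner; exact this
    have hE : HasDerivAt (fun r : ℝ => Real.exp (-c * r ^ (-α)))
        (Real.exp (-c * r ^ (-α)) * (-c * (-α * r ^ (-α - 1)))) r := by
      have : HasDerivAt (fun r : ℝ => -c * r ^ (-α)) (-c * (-α * r ^ (-α - 1))) r :=
        hpow.const_mul (-c)
      exact (Real.hasDerivAt_exp _).comp r this
    have hsq : HasDerivAt (fun r : ℝ => r ^ 2) (2 * r) r := by
      simpa using hasDerivAt_pow 2 r
    have htot : HasDerivAt g ((1/2) * ((2 * r) -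
        ((2 * r) * Real.exp (-c * r ^ (-α)) +
          r ^ 2 * (Real.exp (-c * r ^ (-α)) * (-c * (-α * r ^ (-α - 1))))) -
        c ^ (2/α) * ((c * r ^ (-α)) ^ (s - 1) * Real.exp (-(c * r ^ (-α))) *
          (c * (-α * r ^ (-α - 1)))))) r :=
      ((hsq.sub (hsq.mul hE)).sub (hG.const_mul _)).const_mul _
    convert htot using 1
    have hkey : c ^ (2/α) * (c * r ^ (-α)) ^ (s - 1) = r ^ 2 := by
      have h1 : s - 1 = -(2/α) := by simp [hs_def]
      rw [h1, Real.mul_rpow hc.le (Real.rpow_pos_of_pos hr0 _).le,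
        ← Real.rpow_natCast r 2, ← Real.rpow_mul hr0.le]
      have h2 : -α * -(2/α) = ((2:ℕ):ℝ) := by field_simp; norm_num
      rw [h2, ← mul_assoc, ← Real.rpow_add hc]
      simp
    rw [neg_mul c (r ^ (-α))] at *
    linear_combination (-(1/2) * c * α * r ^ (-α - 1) * Real.exp (-(c * r ^ (-α)))) * hkey
  have hcont : ContinuousOn (fun r : ℝ => (1 - Real.exp (-c * r ^ (-α))) * r)
      (Set.uIcc (1:ℝ) ρ) := by
    intro r hr
    rw [Set.uIcc_of_le hρ.le] at hr
    have hr0 : (0:ℝ) < r := lt_of_lt_of_le one_pos hr.1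
    have : ContinuousAt (fun r : ℝ => (1 - Real.exp (-c * r ^ (-α))) * r) r := by
      have h1 : ContinuousAt (fun r : ℝ => r ^ (-α)) r :=
        Real.continuousAt_rpow_const r (-α) (Or.inl hr0.ne')
      exact ((continuousAt_const.sub
        (Real.continuous_exp.continuousAt.comp (h1.const_mul (-c)))).mul continuousAt_id)
    exact this.continuousWithinAt
  rw [intervalIntegral.integral_eq_sub_of_hasDerivAt key
    (hcont.intervalIntegrable)]
  have h1 : (1:ℝ) ^ (-α) = 1 := Real.one_rpow _
  simp only [hg_def, h1, mul_one]
  ring
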